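/- With notation as in the simplex-with-sum projection: for any x̃ ∈ ℝⁿ, the scalar T(π_S(x̃)) satisfying ∑ᵢ max(π_S(x̃)ᵢ − T, 0) = C with C > 0 obeys T(π_S(x̃)) ≤ ∑ᵢ max(−π_S(x̃)ᵢ, 0), i.e., T is bounded by the total negative part of π_S(x̃). -/

import Mathlib

/-- The water-filling threshold `T` for `π_S(xt)` is bounded by the total negative
part of `π_S(xt)`, where `π_S(xt) i = xt i + (C - ∑ j, xt j)/n`. -/
theorem stmt5 (n : ℕ) (C : ℝ) (hC : 0 < C) (xt : Fin n → ℝ) (T : ℝ) (hT : 0 ≤ T)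
    (hTeq : ∑ i, max (xt i + (C - ∑ j, xt j) / n - T) 0 = C) :
    T ≤ ∑ i, max (-(xt i + (C - ∑ j, xt j) / n)) 0 := by
  set y : Fin n → ℝ := fun i => xt i + (C - ∑ j, xt j) / n with hy
  have hn : 0 < n := by
    rcases Nat.eq_zero_or_pos n with h | h
    · subst h; simp at hTeq; linarith
    · exact h
  have hnR : (0:ℝ) < n := by exact_mod_cast hn
  have hsum : ∑ i, y i = C := by
    simp only [hy, Finset.sum_add_distrib, Finset.sum_const, Finset.card_univ,
      Fintype.card_fin, nsmul_eq_mul]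
    field_simp
    ring
  have key : ∑ i, max (T - y i) 0 = n * T := by
    have h1 : ∀ i, max (T - y i) 0 = max (y i - T) 0 - (y i - T) := by
      intro i
      rcases le_total (y i) T with h | h
      · rw [max_eq_left, max_eq_right] <;> linarith
      · rw [max_eq_right, max_eq_left] <;> linarith
    simp only [h1]
    rw [Finset.sum_sub_distrib, hTeq, Finset.sum_sub_distrib, hsum, Finset.sum_const,
      Finset.card_univ, Fintype.card_fin, nsmul_eq_mul]
    ring
  have hex : ∃ i, T < y i := by
    by_contra h
    push_neg at h
    have : ∑ i, max (y i - T) 0 = 0 := by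
      apply Finset.sum_eq_zero
      intro i _
      rw [max_eq_right]; linarith [h i]
    rw [hTeq] at this; linarith
  obtain ⟨i, hi⟩ := hex
  have hb : ∑ j, max (T - y j) 0 ≤
      ∑ j, ((if j = i then 0 else T) + max (-(y j)) 0) := by
    apply Finset.sum_le_sum
    intro j _
    by_cases hj : j = i
    · subst hj
      rw [if_pos rfl, zero_add]
      have hm : max (T - y j) 0 = 0 := max_eq_right (by linarith)
      rw [hm]
      exact le_max_right (-(y j)) 0
    · simp only [if_neg hj]
      rcases le_total (T - y j) 0 with h | h
      · rw [max_eq_right h]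
        have h0 : (0:ℝ) ≤ max (-(y j)) 0 := le_max_right _ _
        linarith
      · rw [max_eq_left h]
        have : -(y j) ≤ max (-(y j)) 0 := le_max_left _ _
        linarith
  have hb2 : ∑ j, ((if j = i then 0 else T) + max (-(y j)) 0)
      = (n * T - T) + ∑ j, max (-(y j)) 0 := by
    rw [Finset.sum_add_distrib]
    congr 1
    have : ∀ j : Fin n, (if j = i then (0:ℝ) else T) = T - (if j = i then T else 0) := by
      intro j; by_cases hj : j = i <;> simp [hj]
    simp only [this]
    rw [Finset.sum_sub_distrib, Finset.sum_const, Finset.card_univ, Fintype.card_fin,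
      nsmul_eq_mul, Finset.sum_ite_eq' Finset.univ i (fun _ => T), if_pos (Finset.mem_univ i)]
  rw [key, hb2] at hb
  linarith
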